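/- Let A be an Artinian Gorenstein local k-algebra and I an ideal with end degree u. If H = (h_0, h_1, …, h_u) is the Hilbert function of G(I), then h_u ≤ h_0. Equivalently, any b-admissible sequence with h_u > h_0 is not realizable as the Hilbert function of G(I) for any ideal I in an Artinian Gorenstein k-algebra. -/

import Mathlib

/-- Integer powers of an ideal, with the convention `I^j = A` for `j ≤ 0`. -/
def zpowI {A : Type*} [CommRing A] (I : Ideal A) (j : ℤ) : Ideal A :=
  if j ≤ 0 then ⊤ else I ^ j.toNat

/-- The Hilbert function of `G(I)`: `HF(G(I))_i = dim_k I^i/I^{i+1}`. -/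
noncomputable def hfGI (k : Type*) {A : Type*} [Field k] [CommRing A] [Algebra k A]
    (I : Ideal A) (i : ℤ) : ℕ :=
  Module.finrank k (Submodule.restrictScalars k (zpowI I i)) -
    Module.finrank k (Submodule.restrictScalars k (zpowI I (i + 1)))

/-- In an Artinian local ring, every nonzero ideal contains a nonzero element of the socle. -/
lemma exists_socle_mem {A : Type*} [CommRing A] [IsLocalRing A] [IsArtinianRing A]
    (J : Ideal A) (hJ : J ≠ ⊥) :
    ∃ y : A, y ≠ 0 ∧ y ∈ J ∧ y ∈ (⊥ : Ideal A).colon (IsLocalRing.maximalIdeal A) := by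
  obtain ⟨n, hn⟩ := IsArtinianRing.isNilpotent_jacobson_bot (R := A)
  rw [IsLocalRing.jacobson_eq_maximalIdeal ⊥ bot_ne_top] at hn
  set m := IsLocalRing.maximalIdeal A
  have hp : m ^ n * J = ⊥ := by rw [hn]; exact Ideal.bot_mul J
  -- find minimal j with m^j * J = ⊥
  have hex : ∃ j, m ^ j * J = ⊥ := ⟨n, hp⟩
  classical
  let j := Nat.find hex
  have hj : m ^ j * J = ⊥ := Nat.find_spec hex
  have hj0 : j ≠ 0 := by
    intro h
    have := hj
    rw [h, pow_zero, Ideal.one_eq_top, Ideal.top_mul] at this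
    exact hJ this
  obtain ⟨i, hi⟩ := Nat.exists_eq_succ_of_ne_zero hj0
  have hne : m ^ i * J ≠ ⊥ := Nat.find_min hex (by omega)
  obtain ⟨y, hyK, hy0⟩ := Submodule.exists_mem_ne_zero_of_ne_bot hne
  refine ⟨y, hy0, ?_, ?_⟩
  · exact Ideal.mul_le_right hyK
  · rw [Submodule.mem_colon]
    intro r hr
    have hmul : r * y ∈ m * (m ^ i * J) := Ideal.mul_mem_mul hr hyK
    have heq : m * (m ^ i * J) = m ^ j * J := by
      rw [hi, pow_succ]; ring
    rw [heq, hj] at hmul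
    simpa [smul_eq_mul, mul_comm] using hmul

/-- If `H = (h_0, …, h_u)` is the Hilbert function of `G(I)` for an
ideal `I` with end degree `u` in an Artinian Gorenstein local `k`-algebra, then
`h_u ≤ h_0`. -/
theorem last_le_first {k A : Type*} [Field k] [CommRing A]
    [IsLocalRing A] [Algebra k A] [Module.Finite k A]
    (hres : Function.Bijective ((IsLocalRing.residue A) ∘ (algebraMap k A)))
    (hGor : Module.finrank k
      (Submodule.restrictScalars k
        ((⊥ : Ideal A).colon (IsLocalRing.maximalIdeal A))) = 1)
    (I : Ideal A) (u : ℕ)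
    (hu : zpowI I (u : ℤ) ≠ ⊥) (hu1 : zpowI I ((u : ℤ) + 1) = ⊥) :
    hfGI k I (u : ℤ) ≤ hfGI k I 0 := by
  classical
  rcases Nat.eq_zero_or_pos u with rfl | hupos
  · simp
  have : IsArtinian A A := isArtinian_of_tower k inferInstance
  have hart : IsArtinianRing A := this
  set m := IsLocalRing.maximalIdeal A
  set S : Ideal A := (⊥ : Ideal A).colon m with hS
  -- zpowI simplifications
  have hzu : zpowI I (u : ℤ) = I ^ u := by
    unfold zpowI
    rw [if_neg (by exact_mod_cast Nat.not_le.mpr hupos)]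
    norm_num
  have hzu1 : zpowI I ((u : ℤ) + 1) = I ^ (u + 1) := by
    unfold zpowI
    rw [if_neg (by push_cast; omega)]
    have h : ((u:ℤ) + 1).toNat = u + 1 := by omega
    rw [h]
  have hz0 : zpowI I (0 : ℤ) = ⊤ := by unfold zpowI; rw [if_pos le_rfl]
  have hz1 : zpowI I ((0 : ℤ) + 1) = I := by
    show (if ((0:ℤ) + 1) ≤ 0 then ⊤ else I ^ ((0:ℤ)+1).toNat) = I
    rw [if_neg (by norm_num)]
    norm_num
  have hIu1 : I ^ (u + 1) = ⊥ := by rw [← hzu1]; exact hu1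
  have hIu : I ^ u ≠ ⊥ := by rw [← hzu]; exact hu
  -- socle: pick nonzero s and a functional
  have hSne : S.restrictScalars k ≠ ⊥ := by
    intro h
    rw [h] at hGor
    simp at hGor
  -- every nonzero ideal contains S
  have hsocle : ∀ J : Ideal A, J ≠ ⊥ → S ≤ J := by
    intro J hJ
    obtain ⟨y, hy0, hyJ, hyS⟩ := exists_socle_mem J hJ
    -- span k {y} ≤ S.restrictScalars, nonzero, finrank S = 1 ⇒ equality-ish
    have hle : (J.restrictScalars k ⊓ S.restrictScalars k) ≤ S.restrictScalars k := inf_le_right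
    have hne : (J.restrictScalars k ⊓ S.restrictScalars k) ≠ ⊥ := by
      intro h
      have : y ∈ (⊥ : Submodule k A) := h ▸ ⟨hyJ, hyS⟩
      exact hy0 (by simpa using this)
    have h1 : 1 ≤ Module.finrank k (J.restrictScalars k ⊓ S.restrictScalars k : Submodule k A) := by
      rw [Nat.one_le_iff_ne_zero]
      intro h
      exact hne (Submodule.finrank_eq_zero.mp h)
    have heq := Submodule.eq_of_le_of_finrank_le hle (by rw [hGor]; exact h1)
    have hle2 : S.restrictScalars k ≤ J.restrictScalars k := by
      rw [← heq]; exact inf_le_left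
    intro x hx
    exact hle2 hx
  have hSIu : S ≤ I ^ u := hsocle _ hIu
  obtain ⟨s, hs0, hsIu, hsS⟩ := exists_socle_mem (I ^ u) hIu
  obtain ⟨φ, hφ⟩ : ∃ φ : Module.Dual k A, φ s ≠ 0 := by
    by_contra h
    push_neg at h
    exact hs0 ((Module.forall_dual_apply_eq_zero_iff k s).mp h)
  -- the key linear map Ψ : I^u →ₗ[k] Dual k A, x ↦ (a ↦ φ (x * a))
  let Ψ : ((I ^ u).restrictScalars k) →ₗ[k] Module.Dual k A :=
    (LinearMap.llcomp k A A k φ) ∘ₗ (LinearMap.mul k A) ∘ₗ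
      (Submodule.subtype ((I ^ u).restrictScalars k))
  have hΨ : ∀ (x : ((I ^ u).restrictScalars k)) (a : A), Ψ x a = φ ((x : A) * a) := by
    intro x a; rfl
  -- range lands in the dual annihilator of I
  have hmem : ∀ x, Ψ x ∈ (I.restrictScalars k).dualAnnihilator := by
    intro x
    rw [Submodule.mem_dualAnnihilator]
    intro w hw
    rw [hΨ]
    have : (x : A) * w ∈ I ^ (u + 1) := by
      rw [pow_succ]
      exact Ideal.mul_mem_mul x.2 hw
    rw [hIu1] at this
    rw [Submodule.mem_bot] at this
    rw [this, map_zero]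
  let Φ := Ψ.codRestrict _ hmem
  have hker : ∀ x, Φ x = 0 → x = 0 := by
    intro x hx
    by_contra hx0
    have hxne : Ideal.span {(x : A)} ≠ ⊥ := by
      intro h
      exact hx0 (Subtype.ext (Ideal.span_singleton_eq_bot.mp h))
    have hsx : s ∈ Ideal.span {(x : A)} := hsocle _ hxne hsS
    obtain ⟨c, hc⟩ := Ideal.mem_span_singleton'.mp hsx
    have h0 : Ψ x = 0 := congrArg Subtype.val hx
    have : Ψ x c = 0 := by rw [h0]; rfl
    rw [hΨ] at this
    rw [mul_comm, hc] at this
    exact hφ this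
  have hinj : Function.Injective Φ :=
    by
      intro a b hab
      exact sub_eq_zero.mp (hker (a - b) (by rw [map_sub, hab, sub_self]))
  -- dimension count
  have hle : Module.finrank k ((I ^ u).restrictScalars k) ≤
      Module.finrank k ((I.restrictScalars k).dualAnnihilator) :=
    LinearMap.finrank_le_finrank_of_injective hinj
  have hquot : Module.finrank k ((I.restrictScalars k).dualAnnihilator) =
      Module.finrank k (A ⧸ (I.restrictScalars k)) :=
    (Subspace.quotEquivAnnihilator (I.restrictScalars k)).symm.finrank_eq
  have hq := Submodule.finrank_quotient_add_finrank (I.restrictScalars k)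
  unfold hfGI
  rw [hzu, hzu1, hz0, hz1, hIu1]
  have hbot : ((⊥ : Ideal A).restrictScalars k) = ⊥ := rfl
  rw [hbot, finrank_bot, Nat.sub_zero]
  have htop : Module.finrank k ((⊤ : Ideal A).restrictScalars k) = Module.finrank k A := by
    have : ((⊤ : Ideal A).restrictScalars k) = ⊤ := rfl
    rw [this, finrank_top]
  rw [htop]
  omega
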